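/- arXiv:1308.3641 — 3 statements merged into one kernel-verified Lean document; each statement's English description precedes it below -/
import Mathlib

section
/- Let G : ℝ^d → (nonempty convex compact subsets of ℝ^d) be upper semicontinuous and relaxed one-sided Lipschitz with constant l < 0. Then for every y ∈ ℝ^d the set S_G(y) = {z ∈ ℝ^d : y ∈ G(z)} satisfies diam S_G(y) ≤ -(1/l) · sup_{x ∈ S_G(y)} diam G(x). -/
open scoped RealInnerProductSpace

/-- `G` is upper semicontinuous as a set-valued map: for every open set `U` containing
`G x`, the inclusion `G x' ⊆ U` holds for all `x'` near `x`. -/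
def SetValuedUSC {d : ℕ}
    (G : EuclideanSpace ℝ (Fin d) → Set (EuclideanSpace ℝ (Fin d))) : Prop :=
  ∀ x, ∀ U : Set (EuclideanSpace ℝ (Fin d)), IsOpen U → G x ⊆ U →
    ∀ᶠ x' in nhds x, G x' ⊆ U

/-- Diameter estimate for the solution set `S_G(y) = {z : y ∈ G z}` of an upper
semicontinuous ROSL map `G` with negative constant `l`:
`diam S_G(y) ≤ -(1/l) · sup_{x ∈ S_G(y)} diam G(x)`. -/
theorem rosl_diam_solution_set
    {d : ℕ} (G : EuclideanSpace ℝ (Fin d) → Set (EuclideanSpace ℝ (Fin d)))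
    (hG : ∀ x, (G x).Nonempty ∧ Convex ℝ (G x) ∧ IsCompact (G x))
    (husc : SetValuedUSC G)
    (l : ℝ) (hl : l < 0)
    (hROSL : ∀ x x', ∀ y ∈ G x, ∃ y' ∈ G x', ⟪y - y', x - x'⟫ ≤ l * ‖x - x'‖ ^ 2)
    (y : EuclideanSpace ℝ (Fin d))
    (hSne : {z | y ∈ G z}.Nonempty) (hScp : IsCompact {z | y ∈ G z}) :
    Metric.diam {z | y ∈ G z} ≤
      -(1 / l) * ⨆ x : {z | y ∈ G z}, Metric.diam (G x) := by
  set S := {z | y ∈ G z} with hS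
  -- Step 1: the family of diameters is bounded above, via USC and compactness of S.
  have hBdd : BddAbove (Set.range fun x : S => Metric.diam (G (x : EuclideanSpace ℝ (Fin d)))) := by
    -- For each x, pick a radius R x with G x ⊆ ball 0 (R x).
    have hRad : ∀ x : EuclideanSpace ℝ (Fin d), ∃ R : ℝ, 0 < R ∧
        G x ⊆ Metric.ball (0 : EuclideanSpace ℝ (Fin d)) R := by
      intro x
      obtain ⟨R, hR⟩ := ((hG x).2.2.isBounded).subset_ball (0 : EuclideanSpace ℝ (Fin d))
      exact ⟨max R 1, lt_of_lt_of_le one_pos (le_max_right _ _),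
        hR.trans (Metric.ball_subset_ball (le_max_left _ _))⟩
    choose R hRpos hRsub using hRad
    -- USC: neighborhoods where G x' ⊆ ball 0 (R x).
    have hnhds : ∀ x ∈ S, {x' | G x' ⊆ Metric.ball (0 : EuclideanSpace ℝ (Fin d)) (R x)}
        ∈ nhds x := by
      intro x _
      exact husc x _ Metric.isOpen_ball (hRsub x)
    obtain ⟨t, hts, hcov⟩ := hScp.elim_nhds_subcover _ hnhds
    rcases hSne with ⟨x₀, hx₀⟩
    have hx₀cov := hcov hx₀
    -- Bound: R' = max over t plus something.
    classical
    have htne : t.Nonempty := by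
      rcases Set.mem_iUnion₂.1 hx₀cov with ⟨i, hi, _⟩
      exact ⟨i, hi⟩
    set M := t.sup' htne R with hM
    refine ⟨2 * M, ?_⟩
    rintro r ⟨x, rfl⟩
    have hxS : (x : EuclideanSpace ℝ (Fin d)) ∈ S := x.2
    rcases Set.mem_iUnion₂.1 (hcov hxS) with ⟨i, hi, hxi⟩
    have hsub : G (x : EuclideanSpace ℝ (Fin d)) ⊆
        Metric.ball (0 : EuclideanSpace ℝ (Fin d)) M := by
      refine hxi.trans (Metric.ball_subset_ball ?_)
      exact Finset.le_sup' R hi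
    calc Metric.diam (G (x : EuclideanSpace ℝ (Fin d)))
        ≤ Metric.diam (Metric.ball (0 : EuclideanSpace ℝ (Fin d)) M) :=
          Metric.diam_mono hsub Metric.isBounded_ball
      _ ≤ 2 * M := Metric.diam_ball (le_of_lt (lt_of_lt_of_le (hRpos i) (Finset.le_sup' R hi)))
  -- C := the sup
  set C := ⨆ x : S, Metric.diam (G (x : EuclideanSpace ℝ (Fin d))) with hC
  have hdiamle : ∀ x : S, Metric.diam (G (x : EuclideanSpace ℝ (Fin d))) ≤ C :=
    fun x => le_ciSup hBdd x
  have hCne : S.Nonempty := hSne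
  have hC0 : 0 ≤ C := le_trans Metric.diam_nonneg (hdiamle ⟨hCne.choose, hCne.choose_spec⟩)
  have hbound0 : 0 ≤ -(1 / l) * C := by
    apply mul_nonneg _ hC0
    rw [neg_nonneg]
    exact le_of_lt (div_neg_of_pos_of_neg one_pos hl)
  -- Step 2: pairwise distance bound.
  refine Metric.diam_le_of_forall_dist_le hbound0 ?_
  intro x hx x' hx'
  have hyx : y ∈ G x := hx
  have hyx' : y ∈ G x' := hx'
  obtain ⟨y', hy', hineq⟩ := hROSL x x' y hyx
  have h1 : ⟪y' - y, x - x'⟫ ≤ ‖y' - y‖ * ‖x - x'‖ := real_inner_le_norm _ _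
  have h2 : ‖y' - y‖ ≤ Metric.diam (G x') := by
    rw [← dist_eq_norm]
    exact Metric.dist_le_diam_of_mem (hG x').2.2.isBounded hy' hyx'
  have h3 : Metric.diam (G x') ≤ C := hdiamle ⟨x', hx'⟩
  have h4 : ⟪y' - y, x - x'⟫ = -⟪y - y', x - x'⟫ := by
    rw [← inner_neg_left, neg_sub]
  have h5 : -(l * ‖x - x'‖ ^ 2) ≤ C * ‖x - x'‖ := by
    have := h1.trans (mul_le_mul_of_nonneg_right (h2.trans h3) (norm_nonneg _))
    rw [h4] at this
    linarith
  rw [dist_eq_norm]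
  rcases eq_or_lt_of_le (norm_nonneg (x - x')) with h | h
  · rw [← h]; exact hbound0
  · have hnl : (0:ℝ) < -l := neg_pos.2 hl
    have h7 : -l * ‖x - x'‖ ≤ C := by nlinarith [h5, h]
    have h8 : ‖x - x'‖ ≤ C / (-l) := (le_div_iff₀' hnl).mpr h7
    have h9 : C / (-l) = -(1 / l) * C := by ring
    rwa [h9] at h8
end

section
/- Let f : ℝ^d → ℝ^d be one-sided Lipschitz with constant l_f, let h > 0 with l_f h < 1, and fix x ∈ ℝ^d. Suppose for each m in a set M ⊆ ℝ^d there is a (necessarily unique) solution z(m) of z = x + h f(z) + h m. Then the map m ↦ z(m) is Lipschitz on M with constant h/(1 - l_f h), i.e. |z(m) - z(m')| ≤ (h/(1 - l_f h))|m - m'| for all m, m' ∈ M. -/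
open scoped RealInnerProductSpace

/-- The solution `z(m)` of the implicit equation `z = x + h f(z) + h m` depends
Lipschitz-continuously on `m`, with Lipschitz constant `h/(1 - l_f h)`. -/
theorem implicit_solution_lipschitz
    {d : ℕ} (f : EuclideanSpace ℝ (Fin d) → EuclideanSpace ℝ (Fin d))
    (lf : ℝ)
    (hOSL : ∀ u v, ⟪f u - f v, u - v⟫ ≤ lf * ‖u - v‖ ^ 2)
    (h : ℝ) (hh : 0 < h) (hlh : lf * h < 1)
    (x : EuclideanSpace ℝ (Fin d))
    (M : Set (EuclideanSpace ℝ (Fin d)))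
    (z : EuclideanSpace ℝ (Fin d) → EuclideanSpace ℝ (Fin d))
    (hz : ∀ m ∈ M, z m = x + h • f (z m) + h • m) :
    ∀ m ∈ M, ∀ m' ∈ M, ‖z m - z m'‖ ≤ (h / (1 - lf * h)) * ‖m - m'‖ := by
  intro m hm m' hm'
  set Δ := z m - z m' with hΔ
  have hdiff : Δ = h • (f (z m) - f (z m')) + h • (m - m') := by
    rw [hΔ]
    nth_rewrite 1 [hz m hm]
    nth_rewrite 1 [hz m' hm']
    module
  have hkey : ‖Δ‖ ^ 2 ≤ h * (lf * ‖Δ‖ ^ 2) + h * (‖m - m'‖ * ‖Δ‖) := by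
    have h1 : ‖Δ‖ ^ 2 = ⟪Δ, Δ⟫ := (real_inner_self_eq_norm_sq Δ).symm
    rw [h1]
    nth_rewrite 1 [hdiff]
    rw [inner_add_left, real_inner_smul_left, real_inner_smul_left]
    have h2 : ⟪f (z m) - f (z m'), Δ⟫ ≤ lf * ‖Δ‖ ^ 2 := hOSL (z m) (z m')
    have h3 : ⟪m - m', Δ⟫ ≤ ‖m - m'‖ * ‖Δ‖ := real_inner_le_norm _ _
    nlinarith
  have hpos : 0 < 1 - lf * h := by linarith
  have hfin : (1 - lf * h) * ‖Δ‖ * ‖Δ‖ ≤ h * ‖m - m'‖ * ‖Δ‖ := by nlinarith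
  rcases eq_or_lt_of_le (norm_nonneg Δ) with h0 | h0
  · rw [← h0]
    positivity
  · have := (mul_le_mul_iff_of_pos_right h0).mp hfin
    rw [div_mul_eq_mul_div, le_div_iff₀ hpos]
    linarith
end

section
/- Let f : ℝ → ℝ be continuous and one-sided Lipschitz with constant l_f, let M : ℝ → (nonempty compact intervals of ℝ) and let h > 0 with l_f h < 1. Then for fixed x ∈ ℝ, the set Φ = {z ∈ ℝ : z ∈ x + h f(z) + h M(x)} is a nonempty compact interval (in particular convex). -/
/-- In dimension one, the image of the parameterized semi-implicit Euler step
`Φ = {z : z ∈ x + h f(z) + h M(x)}` is a nonempty compact interval (in particular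
convex), provided `f` is continuous and one-sided Lipschitz with `l_f h < 1` and the
values of `M` are nonempty compact intervals. -/
theorem semi_implicit_image_interval
    (f : ℝ → ℝ) (hfc : Continuous f) (lf : ℝ)
    (hOSL : ∀ z z', (f z - f z') * (z - z') ≤ lf * (z - z') ^ 2)
    (M : ℝ → Set ℝ)
    (hM : ∀ x, ∃ a b : ℝ, a ≤ b ∧ M x = Set.Icc a b)
    (h : ℝ) (hh : 0 < h) (hlh : lf * h < 1) (x : ℝ) :
    ∃ a b : ℝ, a ≤ b ∧
      {z : ℝ | ∃ m ∈ M x, z = x + h * f z + h * m} = Set.Icc a b := by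
  obtain ⟨a, b, hab, hMx⟩ := hM x
  set F : ℝ → ℝ := fun z => z - h * f z with hF
  have hk : 0 < 1 - lf * h := by linarith
  have hmono : StrictMono F := by
    intro p q hpq
    have h1 := hOSL q p
    simp only [hF]
    nlinarith [mul_le_mul_of_nonneg_left h1 hh.le, mul_pos hk (sub_pos.mpr hpq)]
  have hcont : Continuous F := continuous_id.sub (continuous_const.mul hfc)
  have htop : Filter.Tendsto F Filter.atTop Filter.atTop := by
    apply Filter.tendsto_atTop_mono' Filter.atTop
      (f₁ := fun z : ℝ => F 0 + (1 - lf * h) * z)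
    · filter_upwards [Filter.eventually_ge_atTop (1:ℝ)] with z hz
      have hz0 : 0 < z := by linarith
      have h1 := hOSL z 0
      have h2 : f z - f 0 ≤ lf * z := by nlinarith
      simp only [hF]
      nlinarith [mul_le_mul_of_nonneg_left h2 hh.le]
    · exact Filter.tendsto_atTop_add_const_left _ _
        (Filter.Tendsto.const_mul_atTop hk Filter.tendsto_id)
  have hbot : Filter.Tendsto F Filter.atBot Filter.atBot := by
    apply Filter.tendsto_atBot_mono' Filter.atBot
      (f₁ := fun z : ℝ => F 0 + (1 - lf * h) * z)
    · filter_upwards [Filter.eventually_le_atBot (-1:ℝ)] with z hz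
      have hz0 : z < 0 := by linarith
      have h1 := hOSL z 0
      have h2 : lf * z ≤ f z - f 0 := by nlinarith
      simp only [hF]
      nlinarith [mul_le_mul_of_nonneg_left h2 hh.le]
    · exact Filter.tendsto_atBot_add_const_left _ _
        (Filter.Tendsto.const_mul_atBot hk Filter.tendsto_id)
  have hsurj : Function.Surjective F := hcont.surjective htop hbot
  obtain ⟨u, hu⟩ := hsurj (x + h * a)
  obtain ⟨v, hv⟩ := hsurj (x + h * b)
  have huv : u ≤ v := by
    rw [← hmono.le_iff_le, hu, hv]
    nlinarith
  refine ⟨u, v, huv, ?_⟩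
  ext z
  simp only [Set.mem_setOf_eq, Set.mem_Icc, hMx]
  constructor
  · rintro ⟨m, ⟨hma, hmb⟩, hz⟩
    have hFz : F z = x + h * m := by simp only [hF]; linarith
    constructor
    · rw [← hmono.le_iff_le, hu, hFz]; nlinarith
    · rw [← hmono.le_iff_le, hFz, hv]; nlinarith
  · rintro ⟨hzu, hzv⟩
    have h1 : x + h * a ≤ F z := by rw [← hu]; exact hmono.monotone hzu
    have h2 : F z ≤ x + h * b := by rw [← hv]; exact hmono.monotone hzv
    refine ⟨(F z - x) / h, ⟨?_, ?_⟩, ?_⟩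
    · rw [le_div_iff₀ hh]; linarith
    · rw [div_le_iff₀ hh]; linarith
    · have : h * ((F z - x) / h) = F z - x := by field_simp
      simp only [hF] at this ⊢
      linarith
end
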